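/- arXiv:math/0002070 — 4 statements merged into one kernel-verified Lean document; each statement's English description precedes it below -/
import Mathlib

section
/- Let G be a König-Egerváry graph and let e be an α-critical edge of G. Then the graph G − e obtained by deleting the edge e is again a König-Egerváry graph. -/
open scoped Classical

namespace KEG

variable {V : Type*}

/-- `S` is a stable (independent) set of vertices of `G`. -/
def IsStable (G : SimpleGraph V) (S : Finset V) : Prop :=
  ∀ ⦃x⦄, x ∈ S → ∀ ⦃y⦄, y ∈ S → ¬G.Adj x y

/-- The stability number `α(G)`: maximum cardinality of a stable set. -/
noncomputable def alphaNum (G : SimpleGraph V) : ℕ :=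
  sSup {n | ∃ S : Finset V, IsStable G S ∧ S.card = n}

/-- `S` is a maximum stable set of `G`. -/
def IsMaxStable (G : SimpleGraph V) (S : Finset V) : Prop :=
  IsStable G S ∧ S.card = alphaNum G

/-- `M` is a matching of `G`: a set of edges of `G`, pairwise non-incident. -/
def IsMatching (G : SimpleGraph V) (M : Finset (Sym2 V)) : Prop :=
  (∀ e ∈ M, e ∈ G.edgeSet) ∧
    ∀ e ∈ M, ∀ f ∈ M, e ≠ f → ∀ v : V, v ∈ e → v ∉ f

/-- The matching number `μ(G)`: maximum cardinality of a matching. -/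
noncomputable def muNum (G : SimpleGraph V) : ℕ :=
  sSup {n | ∃ M : Finset (Sym2 V), IsMatching G M ∧ M.card = n}

/-- A perfect matching: a matching covering every vertex. -/
def IsPerfectMatching (G : SimpleGraph V) (M : Finset (Sym2 V)) : Prop :=
  IsMatching G M ∧ ∀ v : V, ∃ e ∈ M, v ∈ e

/-- A maximal matching: a matching such that no edge of `G` can be added to it
while keeping pairwise non-incidence, i.e. every edge of `G` outside `M` is
incident to an edge of `M`. -/
def IsMaximalMatching (G : SimpleGraph V) (M : Finset (Sym2 V)) : Prop :=
  IsMatching G M ∧ ∀ e ∈ G.edgeSet, e ∉ M → ∃ f ∈ M, ∃ v : V, v ∈ e ∧ v ∈ f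

/-- `G` is a König-Egerváry graph: `α(G) + μ(G) = |V(G)|`. -/
def KonigEgervary (G : SimpleGraph V) [Fintype V] : Prop :=
  alphaNum G + muNum G = Fintype.card V

/-- `e` is an α-critical edge of `G`: `α(G - e) > α(G)`. -/
def IsAlphaCritical (G : SimpleGraph V) (e : Sym2 V) : Prop :=
  e ∈ G.edgeSet ∧ alphaNum G < alphaNum (G.deleteEdges {e})

/-- `e` is a μ-critical edge of `G`: `μ(G - e) < μ(G)`. -/
def IsMuCritical (G : SimpleGraph V) (e : Sym2 V) : Prop :=
  e ∈ G.edgeSet ∧ muNum (G.deleteEdges {e}) < muNum G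

/-- `core(G)`: the set of vertices belonging to every maximum stable set of `G`. -/
def core (G : SimpleGraph V) : Set V :=
  {v | ∀ S : Finset V, IsMaxStable G S → v ∈ S}

/-- `ξ(G) = |core(G)|`. -/
noncomputable def xi (G : SimpleGraph V) : ℕ := (core G).ncard

/-- `σ(G)`: the number of vertices belonging to no maximum stable set of `G`. -/
noncomputable def sigmaNum (G : SimpleGraph V) : ℕ :=
  {v : V | ∀ S : Finset V, IsMaxStable G S → v ∉ S}.ncard

/-- `η(G)`: the number of α-critical edges of `G`. -/
noncomputable def eta (G : SimpleGraph V) : ℕ :=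
  {e : Sym2 V | IsAlphaCritical G e}.ncard

/-- `N(A)`: the set of vertices adjacent to some vertex of `A`. -/
def nbhd (G : SimpleGraph V) (A : Set V) : Set V :=
  {v | ∃ a ∈ A, G.Adj a v}

/-- `N[A] = A ∪ N(A)`: the closed neighborhood of `A`. -/
def closedNbhd (G : SimpleGraph V) (A : Set V) : Set V :=
  A ∪ nbhd G A


section Aux

variable [Fintype V]

lemma stableBdd (G : SimpleGraph V) :
    BddAbove {n | ∃ S : Finset V, IsStable G S ∧ S.card = n} := by
  refine ⟨Fintype.card V, fun n hn => ?_⟩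
  obtain ⟨S, _, rfl⟩ := hn
  exact S.card_le_univ

lemma matchBdd (G : SimpleGraph V) :
    BddAbove {n | ∃ M : Finset (Sym2 V), IsMatching G M ∧ M.card = n} := by
  refine ⟨Fintype.card (Sym2 V), fun n hn => ?_⟩
  obtain ⟨M, _, rfl⟩ := hn
  exact M.card_le_univ

lemma card_le_alpha (G : SimpleGraph V) {S : Finset V} (h : IsStable G S) :
    S.card ≤ alphaNum G :=
  le_csSup (stableBdd G) ⟨S, h, rfl⟩

lemma card_le_mu (G : SimpleGraph V) {M : Finset (Sym2 V)} (h : IsMatching G M) :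
    M.card ≤ muNum G :=
  le_csSup (matchBdd G) ⟨M, h, rfl⟩

lemma exists_max_stable (G : SimpleGraph V) :
    ∃ S : Finset V, IsStable G S ∧ S.card = alphaNum G := by
  have hne : {n | ∃ S : Finset V, IsStable G S ∧ S.card = n}.Nonempty :=
    ⟨0, ∅, by intro x hx; simp at hx, rfl⟩
  exact Nat.sSup_mem hne (stableBdd G)

lemma exists_max_matching (G : SimpleGraph V) :
    ∃ M : Finset (Sym2 V), IsMatching G M ∧ M.card = muNum G := by
  have hne : {n | ∃ M : Finset (Sym2 V), IsMatching G M ∧ M.card = n}.Nonempty :=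
    ⟨0, ∅, by constructor <;> intro x hx <;> simp at hx, rfl⟩
  exact Nat.sSup_mem hne (matchBdd G)

lemma alpha_add_mu_le (G : SimpleGraph V) :
    alphaNum G + muNum G ≤ Fintype.card V := by
  obtain ⟨S, hS, hScard⟩ := exists_max_stable G
  obtain ⟨M, hM, hMcard⟩ := exists_max_matching G
  rcases M.eq_empty_or_nonempty with hMe | hMne
  · have : muNum G = 0 := by rw [← hMcard, hMe]; simp
    rw [this, add_zero, ← hScard]
    exact S.card_le_univ
  -- V is nonempty
  obtain ⟨f₀, hf₀⟩ := hMne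
  have hV : Nonempty V := by
    induction f₀ using Sym2.inductionOn with
    | hf a b => exact ⟨a⟩
  -- each matching edge has an endpoint outside S
  have key : ∀ f ∈ M, ∃ v, v ∈ f ∧ v ∉ S := by
    intro f hf
    have hfE : f ∈ G.edgeSet := hM.1 f hf
    induction f using Sym2.inductionOn with
    | hf a b =>
      rw [SimpleGraph.mem_edgeSet] at hfE
      by_cases ha : a ∈ S
      · by_cases hb : b ∈ S
        · exact absurd hfE (hS ha hb)
        · exact ⟨b, Sym2.mem_mk_right a b, hb⟩
      · exact ⟨a, Sym2.mem_mk_left a b, ha⟩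
  classical
  set g : Sym2 V → V := fun f =>
    if hf : ∃ v, v ∈ f ∧ v ∉ S then hf.choose else Classical.arbitrary V with hg
  have hmem : ∀ f ∈ M, g f ∈ f ∧ g f ∉ S := by
    intro f hf
    have h := key f hf
    simp only [hg, dif_pos h]
    exact h.choose_spec
  have hcard : M.card ≤ (Finset.univ \ S).card := by
    apply Finset.card_le_card_of_injOn g
    · intro f hf
      simp only [Finset.mem_coe, Finset.mem_sdiff, Finset.mem_univ, true_and]
      exact (hmem f hf).2
    · intro f hf f' hf' hgg
      by_contra hne
      exact hM.2 f hf f' hf' hne (g f) (hmem f hf).1 (hgg ▸ (hmem f' hf').1)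
  have : (Finset.univ \ S).card = Fintype.card V - S.card := by
    rw [Finset.card_sdiff_of_subset (Finset.subset_univ S), Finset.card_univ]
  have hSle : S.card ≤ Fintype.card V := S.card_le_univ
  omega

lemma mu_le_mu_deleteEdges_add_one (G : SimpleGraph V) (e : Sym2 V) :
    muNum G ≤ muNum (G.deleteEdges {e}) + 1 := by
  obtain ⟨M, hM, hMcard⟩ := exists_max_matching G
  have hsub : IsMatching (G.deleteEdges {e}) (M.erase e) := by
    constructor
    · intro f hf
      rw [SimpleGraph.edgeSet_deleteEdges]
      exact ⟨hM.1 f (Finset.mem_of_mem_erase hf),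
        by simpa using Finset.ne_of_mem_erase hf⟩
    · intro f hf f' hf' hne v hv
      exact hM.2 f (Finset.mem_of_mem_erase hf) f' (Finset.mem_of_mem_erase hf') hne v hv
  have h1 : (M.erase e).card ≤ muNum (G.deleteEdges {e}) := card_le_mu _ hsub
  have h2 : M.card ≤ (M.erase e).card + 1 := by
    by_cases he : e ∈ M
    · rw [Finset.card_erase_of_mem he]; omega
    · rw [Finset.erase_eq_of_notMem he]; omega
  omega

end Aux

/-- If `G` is a König-Egerváry graph and `e` is an α-critical edge of `G`,
then `G - e` is again a König-Egerváry graph. -/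
theorem stmt_0 {V : Type*} [Fintype V] (G : SimpleGraph V)
    (hG : KonigEgervary G) (e : Sym2 V) (he : IsAlphaCritical G e) :
    KonigEgervary (G.deleteEdges {e}) := by
  have h1 := alpha_add_mu_le (G.deleteEdges {e})
  have h2 := mu_le_mu_deleteEdges_add_one G e
  have h3 := he.2
  unfold KonigEgervary at hG ⊢
  omega

end KEG
end

section
/- If a tree T has a perfect matching M, then every edge of M is α-critical and 2·α(T) = |V(T)|. -/
open scoped Classical

namespace KEG

variable {V : Type*}

section Aux

lemma tree_coloring {T : SimpleGraph V} (hT : T.IsTree) :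
    ∃ c : V → ZMod 2, ∀ ⦃x y⦄, T.Adj x y → c x ≠ c y := by
  obtain ⟨r⟩ := hT.isConnected.nonempty
  choose P hP hPu using fun v => hT.existsUnique_path v r
  have key : ∀ ⦃x y : V⦄, T.Adj x y →
      (P x).length = (P y).length + 1 ∨ (P y).length = (P x).length + 1 := by
    intro x y hxy
    by_cases h : y ∈ (P x).support
    · left
      have h1 : (P x).takeUntil y h = (SimpleGraph.Path.singleton hxy).val :=
        (hT.existsUnique_path x y).unique ((hP x).takeUntil h)
          (SimpleGraph.Path.singleton hxy).2
      have h2 : (P x).dropUntil y h = P y := hPu y _ ((hP x).dropUntil h)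
      have h3 := congrArg SimpleGraph.Walk.length ((P x).take_spec h)
      rw [SimpleGraph.Walk.length_append, h1, h2] at h3
      simp only [SimpleGraph.Path.singleton, SimpleGraph.Walk.length_cons,
        SimpleGraph.Walk.length_nil] at h3
      omega
    · right
      have h1 : (SimpleGraph.Walk.cons hxy.symm (P x)).IsPath :=
        (hP x).cons h
      have h2 := hPu y _ h1
      have := congrArg SimpleGraph.Walk.length h2
      simp only [SimpleGraph.Walk.length_cons] at this
      omega
  refine ⟨fun v => ((P v).length : ZMod 2), ?_⟩
  intro x y hxy hc
  have h2 : ∀ a : ZMod 2, a + 1 ≠ a := by decide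
  simp only at hc
  rcases key hxy with h | h
  · rw [h] at hc; push_cast at hc; exact h2 _ hc
  · rw [h] at hc; push_cast at hc; exact h2 _ hc.symm

lemma tree_not_reachable_del {T : SimpleGraph V} (hT : T.IsTree) {u v : V}
    (huv : T.Adj u v) : ¬ (T.deleteEdges {s(u,v)}).Reachable u v := by
  intro hr
  obtain ⟨w⟩ := hr
  have hpath := w.bypass_isPath
  set p := w.bypass with hp
  have hsub : ∀ f ∈ p.edges, f ∈ T.edgeSet := by
    intro f hf
    have := p.edges_subset_edgeSet hf
    rw [SimpleGraph.edgeSet_deleteEdges] at this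
    exact this.1
  have htr : (p.transfer T hsub).IsPath := hpath.transfer _
  have heq : p.transfer T hsub = (SimpleGraph.Path.singleton huv).val :=
    (hT.existsUnique_path u v).unique htr (SimpleGraph.Path.singleton huv).2
  have he : s(u,v) ∈ p.edges := by
    have h2 := congrArg SimpleGraph.Walk.edges heq
    rw [SimpleGraph.Walk.edges_transfer] at h2
    rw [h2]
    simp [SimpleGraph.Path.singleton]
  have := p.edges_subset_edgeSet he
  rw [SimpleGraph.edgeSet_deleteEdges] at this
  exact this.2 rfl

lemma count_fiberwise [Fintype V] (M : Finset (Sym2 V)) (F : V → Sym2 V)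
    (hFM : ∀ v, F v ∈ M) (Q : V → Prop) [DecidablePred Q]
    [∀ (v : V) (f : Sym2 V), Decidable (F v = f)] :
    (Finset.univ.filter Q).card
      = ∑ f ∈ M, ((Finset.univ.filter Q).filter fun v => F v = f).card := by
  classical
  rw [Finset.card_eq_sum_card_fiberwise (fun x _ => hFM x)]
  exact Finset.sum_congr rfl fun f _ => by rw [Finset.filter_congr_decidable]

lemma fiber_eq_pair [Fintype V] {F : V → Sym2 V} {f : Sym2 V} {x y : V}
    (hFiff : ∀ v : V, F v = f ↔ v ∈ f) (hxy : f = s(x,y))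
    (Q : V → Prop) [DecidablePred Q]
    [∀ (v : V) (g : Sym2 V), Decidable (F v = g)] [DecidableEq V] :
    ((Finset.univ.filter Q).filter fun v => F v = f)
      = ({x, y} : Finset V).filter Q := by
  ext v
  simp only [Finset.mem_filter, Finset.mem_univ, true_and, Finset.mem_insert,
    Finset.mem_singleton]
  rw [hFiff v, hxy, Sym2.mem_iff]
  tauto

lemma pair_filter_one {x y : V} (hxy : x ≠ y) (Q : V → Prop) [DecidablePred Q]
    [DecidableEq V] (hQ : Q x ↔ ¬ Q y) :
    (({x, y} : Finset V).filter Q).card = 1 := by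
  by_cases hx : Q x
  · have hfil : ({x, y} : Finset V).filter Q = {x} := by
      ext v
      simp only [Finset.mem_filter, Finset.mem_insert, Finset.mem_singleton]
      constructor
      · rintro ⟨rfl | rfl, h⟩
        · rfl
        · exact absurd h (hQ.1 hx)
      · rintro rfl; exact ⟨Or.inl rfl, hx⟩
    rw [hfil, Finset.card_singleton]
  · have hy : Q y := by_contra fun h => hx (hQ.2 h)
    have hfil : ({x, y} : Finset V).filter Q = {y} := by
      ext v
      simp only [Finset.mem_filter, Finset.mem_insert, Finset.mem_singleton]
      constructor
      · rintro ⟨rfl | rfl, h⟩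
        · exact absurd h hx
        · rfl
      · rintro rfl; exact ⟨Or.inr rfl, hy⟩
    rw [hfil, Finset.card_singleton]

end Aux

/-- If a tree `T` has a perfect matching `M`, then all edges of `M` are
α-critical and `2·α(T) = |V(T)|`. -/
theorem stmt_5 {V : Type*} [Fintype V] (T : SimpleGraph V) (hT : T.IsTree)
    (M : Finset (Sym2 V)) (hM : IsPerfectMatching T M) :
    (∀ e ∈ M, IsAlphaCritical T e) ∧ 2 * alphaNum T = Fintype.card V := by
  classical
  obtain ⟨⟨hME, hMdisj⟩, hMcov⟩ := hM
  obtain ⟨c, hc⟩ := tree_coloring hT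
  choose F hFM hFv using hMcov
  have hFu : ∀ (v : V) (f : Sym2 V), f ∈ M → v ∈ f → F v = f := by
    intro v f hf hvf
    by_contra hne
    exact hMdisj f hf (F v) (hFM v) (fun h => hne h.symm) v hvf (hFv v)
  have hFiff : ∀ f ∈ M, ∀ v : V, F v = f ↔ v ∈ f := by
    intro f hf v
    exact ⟨fun h => h ▸ hFv v, fun h => hFu v f hf h⟩
  have hpair : ∀ f ∈ M, ∃ x y : V, f = s(x,y) ∧ T.Adj x y := by
    intro f hf
    induction f using Sym2.ind with
    | _ x y => exact ⟨x, y, rfl, (T.mem_edgeSet).1 (hME _ hf)⟩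
  have zfact : ∀ a b t : ZMod 2, a ≠ b → (a = t ↔ ¬ b = t) := by decide
  have zfact2 : ∀ a b : ZMod 2, a ≠ b → a + 1 = b := by decide
  -- |V| = 2|M|
  have hn : Fintype.card V = 2 * M.card := by
    have h0 := count_fiberwise M F hFM (fun _ => True)
    have h1 : ∀ f ∈ M,
        ((Finset.univ.filter fun _ => True).filter fun v => F v = f).card = 2 := by
      intro f hf
      obtain ⟨x, y, rfl, hadj⟩ := hpair f hf
      rw [fiber_eq_pair (hFiff _ hf) rfl, Finset.filter_true_of_mem (fun _ _ => trivial),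
        Finset.card_pair hadj.ne]
    rw [Finset.sum_congr rfl h1, Finset.sum_const, smul_eq_mul] at h0
    simpa [Finset.card_univ, mul_comm] using h0
  -- lower bound stable set
  have hS0 : IsStable T (Finset.univ.filter fun v => c v = 0) := by
    intro x hx y hy hadj
    rw [Finset.mem_filter] at hx hy
    exact (zfact _ _ _ (hc hadj)).1 hx.2 hy.2
  have hS0card : (Finset.univ.filter fun v => c v = 0).card = M.card := by
    rw [count_fiberwise M F hFM (fun v => c v = 0)]
    have h1 : ∀ f ∈ M,
        ((Finset.univ.filter fun v => c v = 0).filter fun v => F v = f).card = 1 := by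
      intro f hf
      obtain ⟨x, y, rfl, hadj⟩ := hpair f hf
      rw [fiber_eq_pair (hFiff _ hf) rfl]
      exact pair_filter_one hadj.ne _ (zfact _ _ _ (hc hadj))
    rw [Finset.sum_congr rfl h1, Finset.sum_const, smul_eq_mul, mul_one]
  -- upper bound
  have hub : ∀ S : Finset V, IsStable T S → S.card ≤ M.card := by
    intro S hS
    apply Finset.card_le_card_of_injOn F (fun v _ => hFM v)
    intro a ha b hb hab
    by_contra hne
    obtain ⟨x, y, hfxy, hadj⟩ := hpair (F a) (hFM a)
    have ha' : a ∈ F a := hFv a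
    have hb' : b ∈ F a := hab ▸ hFv b
    rw [hfxy, Sym2.mem_iff] at ha' hb'
    have hadj' : T.Adj a b := by
      rcases ha' with rfl | rfl <;> rcases hb' with rfl | rfl
      · exact absurd rfl hne
      · exact hadj
      · exact hadj.symm
      · exact absurd rfl hne
    exact hS (Finset.mem_coe.1 ha) (Finset.mem_coe.1 hb) hadj'
  have hset : M.card ∈ {n | ∃ S : Finset V, IsStable T S ∧ S.card = n} :=
    ⟨_, hS0, hS0card⟩
  have hubset : ∀ k ∈ {n | ∃ S : Finset V, IsStable T S ∧ S.card = n}, k ≤ M.card := by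
    rintro k ⟨S, hS, rfl⟩; exact hub S hS
  have halpha : alphaNum T = M.card :=
    le_antisymm (csSup_le ⟨M.card, hset⟩ hubset) (le_csSup ⟨M.card, hubset⟩ hset)
  constructor
  · -- criticality
    intro e he
    obtain ⟨u, v, rfl, huv⟩ := hpair e he
    refine ⟨hME _ he, ?_⟩
    set D := T.deleteEdges {s(u,v)} with hD
    set c' : V → ZMod 2 := fun w => if D.Reachable u w then c w + 1 else c w with hc'def
    have hA : ∀ x y, D.Adj x y → (D.Reachable u x ↔ D.Reachable u y) := by
      intro x y h
      exact ⟨fun hr => hr.trans h.reachable, fun hr => hr.trans h.symm.reachable⟩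
    have hc' : ∀ x y, D.Adj x y → c' x ≠ c' y := by
      intro x y h
      have hTxy : T.Adj x y := (SimpleGraph.deleteEdges_adj.1 h).1
      have hne := hc hTxy
      by_cases hx : D.Reachable u x
      · have hy := (hA x y h).1 hx
        simp only [hc'def, if_pos hx, if_pos hy]
        exact fun hh => hne (add_right_cancel hh)
      · have hy := fun hr => hx ((hA x y h).2 hr)
        simp only [hc'def, if_neg hx, if_neg hy]
        exact hne
    have hS' : IsStable D (Finset.univ.filter fun w => c' w = c v) := by
      intro x hx y hy hadj
      rw [Finset.mem_filter] at hx hy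
      exact hc' x y hadj (hx.2.trans hy.2.symm)
    have hQu : c' u = c v := by
      simp only [hc'def, if_pos (SimpleGraph.Reachable.refl u)]
      exact zfact2 _ _ (hc huv)
    have hQv : c' v = c v := by
      simp only [hc'def, if_neg (tree_not_reachable_del hT huv)]
      exact if_neg (tree_not_reachable_del hT huv)
    have hcard : (Finset.univ.filter fun w => c' w = c v).card = M.card + 1 := by
      rw [count_fiberwise M F hFM (fun w => c' w = c v)]
      have h1 : ∀ f ∈ M,
          ((Finset.univ.filter fun w => c' w = c v).filter fun w => F w = f).card
            = if f = s(u,v) then 2 else 1 := by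
        intro f hf
        obtain ⟨x, y, rfl, hadj⟩ := hpair f hf
        rw [fiber_eq_pair (hFiff _ hf) rfl]
        by_cases hfe : s(x,y) = s(u,v)
        · rw [if_pos hfe]
          have hxy := Sym2.eq_iff.1 hfe
          have hall : ∀ w ∈ ({x, y} : Finset V), c' w = c v := by
            intro w hw
            rcases Finset.mem_insert.1 hw with rfl | hw
            · rcases hxy with ⟨rfl, _⟩ | ⟨rfl, _⟩
              · exact hQu
              · exact hQv
            · rw [Finset.mem_singleton] at hw; subst hw
              rcases hxy with ⟨_, rfl⟩ | ⟨_, rfl⟩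
              · exact hQv
              · exact hQu
          rw [Finset.filter_true_of_mem hall, Finset.card_pair hadj.ne]
        · rw [if_neg hfe]
          have hDadj : D.Adj x y := by
            rw [hD]
            exact SimpleGraph.deleteEdges_adj.2 ⟨hadj, by simpa using hfe⟩
          exact pair_filter_one hadj.ne _ (zfact _ _ _ (hc' x y hDadj))
      rw [Finset.sum_congr rfl h1]
      have h2 : ∀ f ∈ M, (if f = s(u,v) then 2 else 1)
          = 1 + if f = s(u,v) then 1 else 0 := by
        intro f _; split <;> rfl
      rw [Finset.sum_congr rfl h2, Finset.sum_add_distrib, Finset.sum_const,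
        smul_eq_mul, mul_one, Finset.sum_ite_eq' M (s(u,v)) (fun _ => 1), if_pos he]
    have hbdd : BddAbove {n | ∃ S : Finset V, IsStable D S ∧ S.card = n} := by
      refine ⟨Fintype.card V, ?_⟩
      rintro k ⟨S, _, rfl⟩
      exact Finset.card_le_univ S
    have hge : M.card + 1 ≤ alphaNum D :=
      le_csSup hbdd ⟨_, hS', hcard⟩
    calc alphaNum T = M.card := halpha
      _ < M.card + 1 := Nat.lt_succ_self _
      _ ≤ alphaNum D := hge
  · rw [halpha, hn]

end KEG
end

section
/- Let G be a König-Egerváry graph and let G₀ = G − N[core(G)] be the subgraph of G induced by the vertices lying outside the closed neighborhood of core(G). Then G₀ has a perfect matching and G₀ is also a König-Egerváry graph. -/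
open scoped Classical

namespace KEG

variable {V : Type*}

/-! ### Auxiliary lemmas -/

section Aux

variable {U : Type*}

lemma empty_stable (H : SimpleGraph U) : IsStable H (∅ : Finset U) := by
  intro x hx
  exact absurd hx (Finset.notMem_empty x)

lemma empty_matching (H : SimpleGraph U) : IsMatching H (∅ : Finset (Sym2 U)) :=
  ⟨fun e he => absurd he (Finset.notMem_empty e),
   fun e he => absurd he (Finset.notMem_empty e)⟩

lemma adj_of_mem_edge {H : SimpleGraph U} {e : Sym2 U} (he : e ∈ H.edgeSet)
    {v w : U} (hv : v ∈ e) (hw : w ∈ e) (hne : v ≠ w) : H.Adj v w := by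
  induction e using Sym2.ind with
  | _ x y =>
    rw [Sym2.mem_iff] at hv hw
    rw [SimpleGraph.mem_edgeSet] at he
    rcases hv with rfl | rfl <;> rcases hw with rfl | rfl
    · exact absurd rfl hne
    · exact he
    · exact he.symm
    · exact absurd rfl hne

variable [Fintype U]

lemma stable_bdd (H : SimpleGraph U) :
    BddAbove {n | ∃ S : Finset U, IsStable H S ∧ S.card = n} := by
  refine ⟨Fintype.card U, fun n hn => ?_⟩
  obtain ⟨S, _, rfl⟩ := hn
  simpa using S.card_le_univ

lemma stable_card_le (H : SimpleGraph U) {S : Finset U} (h : IsStable H S) :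
    S.card ≤ alphaNum H :=
  le_csSup (stable_bdd H) ⟨S, h, rfl⟩

lemma exists_maxStable (H : SimpleGraph U) : ∃ S : Finset U, IsMaxStable H S := by
  have h : alphaNum H ∈ {n | ∃ S : Finset U, IsStable H S ∧ S.card = n} :=
    Nat.sSup_mem ⟨0, ∅, empty_stable H, rfl⟩ (stable_bdd H)
  obtain ⟨S, h1, h2⟩ := h
  exact ⟨S, h1, h2⟩

lemma matching_bdd (H : SimpleGraph U) :
    BddAbove {n | ∃ M : Finset (Sym2 U), IsMatching H M ∧ M.card = n} := by
  refine ⟨Fintype.card (Sym2 U), fun n hn => ?_⟩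
  obtain ⟨M, _, rfl⟩ := hn
  simpa using M.card_le_univ

lemma matching_card_le (H : SimpleGraph U) {M : Finset (Sym2 U)} (h : IsMatching H M) :
    M.card ≤ muNum H :=
  le_csSup (matching_bdd H) ⟨M, h, rfl⟩

lemma exists_maxMatching (H : SimpleGraph U) :
    ∃ M : Finset (Sym2 U), IsMatching H M ∧ M.card = muNum H := by
  have h : muNum H ∈ {n | ∃ M : Finset (Sym2 U), IsMatching H M ∧ M.card = n} :=
    Nat.sSup_mem ⟨0, ∅, empty_matching H, rfl⟩ (matching_bdd H)
  obtain ⟨M, h1, h2⟩ := h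
  exact ⟨M, h1, h2⟩

end Aux

/-! ### The edge covering a vertex -/

/-- The edge of `M` containing `v` (junk value if there is none). -/
noncomputable def edgeOf {U : Type*} (M : Finset (Sym2 U)) (v : U) : Sym2 U :=
  if h : ∃ e ∈ M, v ∈ e then h.choose else s(v, v)

lemma edgeOf_spec {U : Type*} {M : Finset (Sym2 U)} {v : U} (h : ∃ e ∈ M, v ∈ e) :
    edgeOf M v ∈ M ∧ v ∈ edgeOf M v := by
  rw [edgeOf, dif_pos h]
  exact ⟨h.choose_spec.1, h.choose_spec.2⟩

lemma edgeOf_eq {U : Type*} {H : SimpleGraph U} {M : Finset (Sym2 U)}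
    (hM : IsMatching H M) {e : Sym2 U} {v : U} (he : e ∈ M) (hv : v ∈ e) :
    edgeOf M v = e := by
  have h : ∃ e ∈ M, v ∈ e := ⟨e, he, hv⟩
  obtain ⟨h1, h2⟩ := edgeOf_spec h
  by_contra hne
  exact hM.2 _ h1 _ he hne v h2 hv

section Count

variable {U : Type*} [Fintype U] {H : SimpleGraph U} {M : Finset (Sym2 U)}

lemma matching_cover_card (hM : IsMatching H M) :
    (Finset.univ.filter (fun v : U => ∃ e ∈ M, v ∈ e)).card = 2 * M.card := by
  classical
  set C : Finset U := Finset.univ.filter (fun v : U => ∃ e ∈ M, v ∈ e) with hC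
  have h1 : C.card = ∑ e ∈ M, (C.filter (fun v => edgeOf M v = e)).card := by
    refine Finset.card_eq_sum_card_fiberwise fun v hv => ?_
    rw [hC, Finset.mem_coe, Finset.mem_filter] at hv
    exact Finset.mem_coe.2 (edgeOf_spec hv.2).1
  have hterm : ∀ e ∈ M, (C.filter (fun v => edgeOf M v = e)).card = 2 := by
    intro e he
    have hedge : e ∈ H.edgeSet := hM.1 e he
    induction e using Sym2.ind with
    | _ x y =>
      have hxy : x ≠ y := ((SimpleGraph.mem_edgeSet H).1 hedge).ne
      have hset : C.filter (fun v => edgeOf M v = s(x, y)) = {x, y} := by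
        ext v
        simp only [Finset.mem_filter, Finset.mem_insert, Finset.mem_singleton, hC,
          Finset.mem_univ, true_and]
        constructor
        · rintro ⟨hv, heq⟩
          have := (edgeOf_spec hv).2
          rw [heq, Sym2.mem_iff] at this
          exact this
        · intro hv
          have hvmem : v ∈ s(x, y) := Sym2.mem_iff.2 hv
          exact ⟨⟨s(x, y), he, hvmem⟩, edgeOf_eq hM he hvmem⟩
      rw [hset]
      rw [Finset.card_insert_of_notMem (by simpa using hxy), Finset.card_singleton]
  rw [h1, Finset.sum_congr rfl hterm, Finset.sum_const, smul_eq_mul, mul_comm]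

lemma matching_two_mul_le (hM : IsMatching H M) : 2 * M.card ≤ Fintype.card U := by
  classical
  rw [← matching_cover_card hM]
  simpa using (Finset.univ.filter (fun v : U => ∃ e ∈ M, v ∈ e)).card_le_univ

lemma perfect_two_mul (hM : IsMatching H M) (hcov : ∀ v : U, ∃ e ∈ M, v ∈ e) :
    2 * M.card = Fintype.card U := by
  classical
  rw [← matching_cover_card hM]
  rw [Finset.filter_true_of_mem fun v _ => hcov v, Finset.card_univ]

lemma stable_le_perfect (hM : IsMatching H M) (hcov : ∀ v : U, ∃ e ∈ M, v ∈ e)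
    {S : Finset U} (hS : IsStable H S) : S.card ≤ M.card := by
  classical
  refine Finset.card_le_card_of_injOn (edgeOf M) (fun v _ => (edgeOf_spec (hcov v)).1) ?_
  intro v1 hv1 v2 hv2 heq
  by_contra hne
  have h1 := edgeOf_spec (hcov v1)
  have h2 := edgeOf_spec (hcov v2)
  rw [heq] at h1
  have hadj : H.Adj v1 v2 := by
    refine adj_of_mem_edge (hM.1 _ h2.1) ?_ h2.2 hne
    rw [← heq]
    exact (edgeOf_spec (hcov v1)).2
  exact hS (Finset.mem_coe.1 hv1) (Finset.mem_coe.1 hv2) hadj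

end Count

/-! ### The key structure lemma for König–Egerváry graphs -/

/-- In a König-Egerváry graph, for every maximum stable set `T` and every maximum
matching `M`: every vertex outside `T` is covered by `M`, and every edge of `M`
has exactly one endpoint in `T`. -/
lemma key {V : Type*} [Fintype V] (G : SimpleGraph V) (hG : KonigEgervary G)
    {T : Finset V} (hT : IsMaxStable G T)
    {M : Finset (Sym2 V)} (hM : IsMatching G M) (hMc : M.card = muNum G) :
    (∀ v, v ∉ T → ∃ e ∈ M, v ∈ e) ∧
      ∀ e ∈ M, ∀ x y : V, e = s(x, y) → (x ∈ T ↔ y ∉ T) := by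
  classical
  set Tc : Finset V := Finset.univ \ T with hTcdef
  have hTle : T.card ≤ Fintype.card V := by simpa using T.card_le_univ
  have hTcard : Tc.card = M.card := by
    rw [hTcdef, Finset.card_sdiff_of_subset (Finset.subset_univ T), Finset.card_univ]
    have e1 : T.card = alphaNum G := hT.2
    have e2 : alphaNum G + muNum G = Fintype.card V := hG
    omega
  have hq : ∀ e ∈ M, ∃ v, v ∈ e ∧ v ∉ T := by
    intro e he
    have hedge := hM.1 e he
    induction e using Sym2.ind with
    | _ x y =>
      rw [SimpleGraph.mem_edgeSet] at hedge
      by_contra hcon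
      push_neg at hcon
      exact hT.1 (hcon x (Sym2.mem_iff.2 (Or.inl rfl)))
        (hcon y (Sym2.mem_iff.2 (Or.inr rfl))) hedge
  choose q hq1 hq2 using hq
  have hmaps : ∀ e (he : e ∈ M), q e he ∈ Tc := by
    intro e he
    rw [hTcdef, Finset.mem_sdiff]
    exact ⟨Finset.mem_univ _, hq2 e he⟩
  have hinj : ∀ e1 e2 (he1 : e1 ∈ M) (he2 : e2 ∈ M),
      q e1 he1 = q e2 he2 → e1 = e2 := by
    intro e1 e2 he1 he2 heq
    by_contra hne
    refine hM.2 e1 he1 e2 he2 hne (q e1 he1) (hq1 e1 he1) ?_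
    rw [heq]
    exact hq1 e2 he2
  have hsurj := Finset.surj_on_of_inj_on_of_card_le (fun e he => q e he)
    hmaps hinj hTcard.le
  have cov : ∀ v, v ∉ T → ∃ e ∈ M, v ∈ e := by
    intro v hv
    obtain ⟨e, he, hveq⟩ := hsurj v (by rw [hTcdef, Finset.mem_sdiff]; exact ⟨Finset.mem_univ _, hv⟩)
    refine ⟨e, he, ?_⟩
    rw [hveq]
    exact hq1 e he
  refine ⟨cov, ?_⟩
  intro e he x y hexy
  have hedge : G.Adj x y := by
    have := hM.1 e he
    rw [hexy, SimpleGraph.mem_edgeSet] at this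
    exact this
  constructor
  · intro hx hy
    exact hT.1 hx hy hedge
  · intro hy
    by_contra hx
    -- both endpoints outside T : contradiction
    obtain ⟨e1, he1, hxeq⟩ := hsurj x (by rw [hTcdef, Finset.mem_sdiff]; exact ⟨Finset.mem_univ _, hx⟩)
    obtain ⟨e2, he2, hyeq⟩ := hsurj y (by rw [hTcdef, Finset.mem_sdiff]; exact ⟨Finset.mem_univ _, hy⟩)
    have hxe : x ∈ e := by rw [hexy]; exact Sym2.mem_iff.2 (Or.inl rfl)
    have hye : y ∈ e := by rw [hexy]; exact Sym2.mem_iff.2 (Or.inr rfl)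
    have he1e : e1 = e := by
      by_contra hne
      exact hM.2 e1 he1 e he hne x (hxeq ▸ hq1 e1 he1) hxe
    have he2e : e2 = e := by
      by_contra hne
      exact hM.2 e2 he2 e he hne y (hyeq ▸ hq1 e2 he2) hye
    subst he1e; subst he2e
    have : x = y := by rw [hxeq, hyeq]
    exact hedge.ne this

/-- If `G` is a König-Egerváry graph and `G₀ = G - N[core(G)]` is the subgraph
induced on the vertices outside the closed neighborhood of `core(G)`, then `G₀`
has a perfect matching and is also a König-Egerváry graph. -/
theorem stmt_9 {V : Type*} [Fintype V] (G : SimpleGraph V)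
    (hG : KonigEgervary G) (W : Set V) (hW : W = (closedNbhd G (core G))ᶜ) :
    (∃ M : Finset (Sym2 ↥W), IsPerfectMatching (G.induce W) M) ∧
      KonigEgervary (G.induce W) := by
  classical
  obtain ⟨S, hS⟩ := exists_maxStable G
  obtain ⟨M, hM, hMc⟩ := exists_maxMatching G
  have hWiff : ∀ v, v ∈ W ↔ v ∉ core G ∧ ∀ c ∈ core G, ¬G.Adj c v := by
    intro v
    subst hW
    simp only [Set.mem_compl_iff, closedNbhd, Set.mem_union, nbhd, Set.mem_setOf_eq, not_or,
      not_exists, not_and]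
  have hcoreT : ∀ (T : Finset V), IsMaxStable G T → ∀ v ∈ core G, v ∈ T :=
    fun T hT v hv => hv T hT
  -- main partner lemma
  have main : ∀ v, v ∈ W → ∃ w, w ∈ W ∧ s(v, w) ∈ M := by
    intro v hv
    obtain ⟨hvc, hvn⟩ := (hWiff v).1 hv
    have hvc' : ¬∀ S' : Finset V, IsMaxStable G S' → v ∈ S' := hvc
    push_neg at hvc'
    obtain ⟨T, hT, hvT⟩ := hvc'
    obtain ⟨e, heM, hve⟩ := (key G hG hT hM hMc).1 v hvT
    have hw := Sym2.other_spec hve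
    set w := Sym2.Mem.other hve with hwdef
    have heS := (key G hG hS hM hMc).2 e heM v w hw.symm
    have hvw : G.Adj v w := by
      have := hM.1 e heM
      rw [← hw, SimpleGraph.mem_edgeSet] at this
      exact this
    refine ⟨w, ?_, by rw [hw]; exact heM⟩
    rw [hWiff]
    by_cases hvS : v ∈ S
    · have hwS : w ∉ S := heS.1 hvS
      constructor
      · intro hwc
        exact hwS (hcoreT S hS w hwc)
      · intro c hc hcw
        have hcT : c ∈ T := hcoreT T hT c hc
        have hwT : w ∉ T := fun hwT => hT.1 hcT hwT hcw
        have hkT := (key G hG hT hM hMc).2 e heM v w hw.symm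
        exact hvT (hkT.2 hwT)
    · have hwS : w ∈ S := by
        by_contra hwS
        exact hvS (heS.2 hwS)
      constructor
      · intro hwc
        exact hvn w hwc hvw.symm
      · intro c hc hcw
        exact hS.1 (hcoreT S hS c hc) hwS hcw
  -- the matching on W
  set M₀ : Finset (Sym2 ↥W) :=
    Finset.univ.filter (fun e => Sym2.map (Subtype.val) e ∈ M) with hM₀def
  have memM₀ : ∀ e : Sym2 ↥W, e ∈ M₀ ↔ Sym2.map (Subtype.val) e ∈ M := by
    intro e
    simp [hM₀def]
  have hMap : ∀ a b : ↥W, Sym2.map (Subtype.val) s(a, b) = s((a : V), (b : V)) :=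
    fun a b => Sym2.map_pair_eq _ _ _
  have hmatch : IsMatching (G.induce W) M₀ := by
    constructor
    · intro e he
      induction e using Sym2.ind with
      | _ a b =>
        rw [memM₀, hMap] at he
        have hadj := hM.1 _ he
        rw [SimpleGraph.mem_edgeSet] at hadj ⊢
        exact hadj
    · intro e he f hf hef v hve hvf
      rw [memM₀] at he hf
      have hef' : Sym2.map (Subtype.val) e ≠ Sym2.map (Subtype.val) f :=
        fun h => hef (Sym2.map.injective Subtype.val_injective h)
      have h1 : (v : V) ∈ Sym2.map (Subtype.val) e := Sym2.mem_map.2 ⟨v, hve, rfl⟩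
      have h2 : (v : V) ∈ Sym2.map (Subtype.val) f := Sym2.mem_map.2 ⟨v, hvf, rfl⟩
      exact hM.2 _ he _ hf hef' (v : V) h1 h2
  have hperf : ∀ v : ↥W, ∃ e ∈ M₀, v ∈ e := by
    intro v
    obtain ⟨w, hwW, hwM⟩ := main (v : V) v.2
    refine ⟨s(v, ⟨w, hwW⟩), ?_, Sym2.mem_iff.2 (Or.inl rfl)⟩
    rw [memM₀, hMap]
    exact hwM
  have hcard2 : 2 * M₀.card = Fintype.card ↥W := perfect_two_mul hmatch hperf
  have hmu : muNum (G.induce W) = M₀.card := by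
    apply le_antisymm
    · refine csSup_le ⟨0, ∅, empty_matching _, rfl⟩ ?_
      rintro n ⟨M', hM', rfl⟩
      have := matching_two_mul_le hM'
      omega
    · exact matching_card_le _ hmatch
  set S₀ : Finset ↥W := Finset.univ.filter (fun v => (v : V) ∈ S) with hS₀def
  have hS₀stable : IsStable (G.induce W) S₀ := by
    intro x hx y hy hadj
    rw [hS₀def, Finset.mem_filter] at hx hy
    exact hS.1 hx.2 hy.2 hadj
  have hS₀card : S₀.card = M₀.card := by
    refine Finset.card_bij (fun v _ => edgeOf M₀ v) (fun v _ => (edgeOf_spec (hperf v)).1)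
      ?_ ?_
    · intro v1 hv1 v2 hv2 heq
      have heq' : edgeOf M₀ v1 = edgeOf M₀ v2 := heq
      by_contra hne
      have h2 := edgeOf_spec (hperf v2)
      have hadj : (G.induce W).Adj v1 v2 := by
        refine adj_of_mem_edge (hmatch.1 _ h2.1) ?_ h2.2 hne
        rw [← heq']
        exact (edgeOf_spec (hperf v1)).2
      rw [hS₀def, Finset.mem_filter] at hv1 hv2
      exact hS.1 hv1.2 hv2.2 hadj
    · intro e he
      induction e using Sym2.ind with
      | _ a b =>
        have heM : s((a : V), (b : V)) ∈ M := by
          rw [← hMap, ← memM₀]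
          exact he
        have hkey := (key G hG hS hM hMc).2 _ heM (a : V) (b : V) rfl
        by_cases haS : (a : V) ∈ S
        · refine ⟨a, ?_, ?_⟩
          · rw [hS₀def, Finset.mem_filter]
            exact ⟨Finset.mem_univ _, haS⟩
          · exact edgeOf_eq hmatch he (Sym2.mem_iff.2 (Or.inl rfl))
        · have hbS : (b : V) ∈ S := by
            by_contra hbS
            exact haS (hkey.2 hbS)
          refine ⟨b, ?_, ?_⟩
          · rw [hS₀def, Finset.mem_filter]
            exact ⟨Finset.mem_univ _, hbS⟩
          · exact edgeOf_eq hmatch he (Sym2.mem_iff.2 (Or.inr rfl))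
  have halpha : alphaNum (G.induce W) = M₀.card := by
    apply le_antisymm
    · refine csSup_le ⟨0, ∅, empty_stable _, rfl⟩ ?_
      rintro n ⟨S', hS', rfl⟩
      exact stable_le_perfect hmatch hperf hS'
    · rw [← hS₀card]
      exact stable_card_le _ hS₀stable
  refine ⟨⟨M₀, hmatch, hperf⟩, ?_⟩
  rw [KonigEgervary, halpha, hmu]
  omega

end KEG
end

section
/- Let G be any finite simple graph and let G₀ = G − N[core(G)] be the subgraph induced by the vertices lying outside the closed neighborhood of core(G). Then α(G) = α(G₀) + ξ(G), the maximum stable sets of G₀ are exactly the sets S ∩ V(G₀) for S a maximum stable set of G, and core(G₀) = ∅. -/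
open scoped Classical

namespace KEG

variable {V : Type*}

lemma stable_card_le_alpha [Fintype V] (G : SimpleGraph V) {S : Finset V}
    (hS : IsStable G S) : S.card ≤ alphaNum G := by
  apply le_csSup
  · exact ⟨Fintype.card V, by rintro n ⟨S, _, rfl⟩; simpa using S.card_le_univ⟩
  · exact ⟨S, hS, rfl⟩

lemma exists_maxStable_s12 [Fintype V] (G : SimpleGraph V) : ∃ S, IsMaxStable G S := by
  have h : alphaNum G ∈ {n | ∃ S : Finset V, IsStable G S ∧ S.card = n} := by
    apply Nat.sSup_mem
    · exact ⟨0, ∅, by intro x hx; simp at hx, rfl⟩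
    · exact ⟨Fintype.card V, by rintro n ⟨S, _, rfl⟩; simpa using S.card_le_univ⟩
  obtain ⟨S, hS, hc⟩ := h
  exact ⟨S, hS, hc⟩

/-- For `G₀ = G - N[core(G)]`: `α(G) = α(G₀) + ξ(G)`, the maximum stable sets
of `G₀` are exactly the traces `S ∩ V(G₀)` of maximum stable sets `S` of `G`,
and `core(G₀) = ∅`. -/
theorem stmt_12 {V : Type*} [Fintype V] (G : SimpleGraph V)
    (W : Set V) (hW : W = (closedNbhd G (core G))ᶜ) :
    alphaNum G = alphaNum (G.induce W) + xi G ∧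
      (∀ T : Finset ↥W,
        IsMaxStable (G.induce W) T ↔
          ∃ S : Finset V, IsMaxStable G S ∧
            (↑(T.map (Function.Embedding.subtype fun x => x ∈ W)) : Set V) =
              ↑S ∩ W) ∧
      core (G.induce W) = (∅ : Set ↥W) := by
  classical
  haveI : Fintype ↥W := Fintype.ofFinite _
  set emb : ↥W ↪ V := Function.Embedding.subtype (fun x => x ∈ W) with hemb
  have hWmem : ∀ v : V, v ∈ W ↔ v ∉ core G ∧ ∀ a ∈ core G, ¬ G.Adj a v := by
    intro v
    rw [hW]
    simp only [Set.mem_compl_iff, closedNbhd, nbhd, Set.mem_union, Set.mem_setOf_eq, not_or,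
      not_exists, not_and]
  set C : Finset V := (Set.toFinite (core G)).toFinset with hC
  have hCmem : ∀ v, v ∈ C ↔ v ∈ core G := fun v => Set.Finite.mem_toFinset _
  have hCcard : C.card = xi G := by
    rw [xi, Set.ncard_eq_toFinset_card (core G) (Set.toFinite _)]
  -- join: a stable set of the induced graph together with the core is stable in G
  have join : ∀ T : Finset ↥W, IsStable (G.induce W) T →
      IsStable G (T.map emb ∪ C) ∧ (T.map emb ∪ C).card = T.card + C.card := by
    intro T hT
    have hmemTv : ∀ v : V, v ∈ T.map emb ↔ ∃ h : v ∈ W, (⟨v, h⟩ : ↥W) ∈ T := by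
      intro v
      simp [hemb, Finset.mem_map, Function.Embedding.subtype]
      constructor
      · rintro ⟨a, b, h, rfl⟩
        exact ⟨b, h⟩
      · rintro ⟨h, hT⟩
        exact ⟨v, h, hT, rfl⟩
    have hdisj : Disjoint (T.map emb) C := by
      rw [Finset.disjoint_left]
      intro v hv hvC
      obtain ⟨hvW, -⟩ := (hmemTv v).1 hv
      exact ((hWmem v).1 hvW).1 ((hCmem v).1 hvC)
    constructor
    · intro x hx y hy hadj
      rcases Finset.mem_union.1 hx with hx | hx <;> rcases Finset.mem_union.1 hy with hy | hy
      · obtain ⟨hxW, hxT⟩ := (hmemTv x).1 hx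
        obtain ⟨hyW, hyT⟩ := (hmemTv y).1 hy
        exact hT hxT hyT hadj
      · obtain ⟨hxW, -⟩ := (hmemTv x).1 hx
        exact ((hWmem x).1 hxW).2 y ((hCmem y).1 hy) hadj.symm
      · obtain ⟨hyW, -⟩ := (hmemTv y).1 hy
        exact ((hWmem y).1 hyW).2 x ((hCmem x).1 hx) hadj
      · obtain ⟨S, hS⟩ := exists_maxStable_s12 G
        exact hS.1 ((hCmem x).1 hx S hS) ((hCmem y).1 hy S hS) hadj
    · rw [Finset.card_union_of_disjoint hdisj, Finset.card_map]
  -- split: a maximum stable set of G splits into the core and its trace on W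
  have split : ∀ S : Finset V, IsMaxStable G S →
      IsStable (G.induce W) (S.subtype (· ∈ W)) ∧
        (S.subtype (· ∈ W)).map emb = S.filter (· ∈ W) ∧
        S.card = C.card + (S.subtype (· ∈ W)).card := by
    intro S hS
    have hmap : (S.subtype (· ∈ W)).map emb = S.filter (· ∈ W) := Finset.subtype_map _
    refine ⟨?_, hmap, ?_⟩
    · intro x hx y hy hadj
      rw [Finset.mem_subtype] at hx hy
      exact hS.1 hx hy hadj
    · have hsplit : S = C ∪ S.filter (· ∈ W) := by
        ext v
        simp only [Finset.mem_union, Finset.mem_filter]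
        constructor
        · intro hv
          by_cases hvc : v ∈ core G
          · exact Or.inl ((hCmem v).2 hvc)
          · refine Or.inr ⟨hv, (hWmem v).2 ⟨hvc, ?_⟩⟩
            intro a ha hadj
            exact hS.1 (ha S hS) hv hadj
        · rintro (hv | ⟨hv, -⟩)
          · exact (hCmem v).1 hv S hS
          · exact hv
      have hdisj : Disjoint C (S.filter (· ∈ W)) := by
        rw [Finset.disjoint_left]
        intro v hvC hvf
        exact ((hWmem v).1 (Finset.mem_filter.1 hvf).2).1 ((hCmem v).1 hvC)
      have hc : (S.subtype (· ∈ W)).card = (S.filter (· ∈ W)).card := by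
        rw [← hmap, Finset.card_map]
      rw [hc, ← Finset.card_union_of_disjoint hdisj, ← hsplit]
  -- alpha equality
  have h1 : alphaNum G ≤ alphaNum (G.induce W) + xi G := by
    obtain ⟨S, hS⟩ := exists_maxStable_s12 G
    obtain ⟨hst, -, hcard⟩ := split S hS
    rw [← hS.2, hcard, ← hCcard]
    have := stable_card_le_alpha (G.induce W) hst
    omega
  have h2 : alphaNum (G.induce W) + xi G ≤ alphaNum G := by
    obtain ⟨T, hT⟩ := exists_maxStable_s12 (G.induce W)
    obtain ⟨hst, hcard⟩ := join T hT.1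
    have := stable_card_le_alpha G hst
    rw [hcard, hT.2, hCcard] at this
    exact this
  have heq : alphaNum G = alphaNum (G.induce W) + xi G := le_antisymm h1 h2
  refine ⟨heq, ?_, ?_⟩
  · intro T
    constructor
    · intro hT
      obtain ⟨hst, hcard⟩ := join T hT.1
      refine ⟨T.map emb ∪ C, ⟨hst, by rw [hcard, hT.2, hCcard, heq]⟩, ?_⟩
      ext v
      simp only [Set.mem_inter_iff, Finset.coe_union, Set.mem_union, Finset.mem_coe]
      constructor
      · intro hv
        have hvW : v ∈ W := by
          obtain ⟨a, -, rfl⟩ := Finset.mem_map.1 hv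
          exact a.2
        exact ⟨Or.inl hv, hvW⟩
      · rintro ⟨hv | hv, hvW⟩
        · exact hv
        · exact absurd ((hCmem v).1 hv) ((hWmem v).1 hvW).1
    · rintro ⟨S, hS, hset⟩
      obtain ⟨hst, hmap, hcard⟩ := split S hS
      have hTeq : T.map emb = S.filter (· ∈ W) := by
        apply Finset.coe_injective
        rw [hset, Finset.coe_filter]
        ext v
        simp [Set.mem_inter_iff]
      have hTstable : IsStable (G.induce W) T := by
        intro x hx y hy hadj
        have hx' : (x : V) ∈ T.map emb := Finset.mem_map_of_mem _ hx
        have hy' : (y : V) ∈ T.map emb := Finset.mem_map_of_mem _ hy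
        rw [hTeq, Finset.mem_filter] at hx' hy'
        exact hS.1 hx'.1 hy'.1 hadj
      refine ⟨hTstable, ?_⟩
      have h3 : T.card = (S.filter (· ∈ W)).card := by rw [← hTeq, Finset.card_map]
      have h4 : (S.subtype (· ∈ W)).card = (S.filter (· ∈ W)).card := by
        rw [← hmap, Finset.card_map]
      have h5 := hS.2
      omega
  · ext v
    simp only [Set.mem_empty_iff_false, iff_false]
    intro hvcore
    have hvG : (v : V) ∈ core G := by
      intro S hS
      obtain ⟨hst, hmap, hcard⟩ := split S hS
      have hmax : IsMaxStable (G.induce W) (S.subtype (· ∈ W)) := by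
        refine ⟨hst, ?_⟩
        have := hS.2
        omega
      have hv := hvcore _ hmax
      rw [Finset.mem_subtype] at hv
      exact hv
    exact ((hWmem v).1 v.2).1 hvG
end KEG
end
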